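/- Let S be the monoid presented by generators a_0, a_1, a_2, … subject to the relations a_i a_j = a_{j+1} a_i for all i ≤ j. Then S is left cancellative: for all s, u, v ∈ S, su = sv implies u = v. -/

import Mathlib

/-- The defining relations of Kruml's monoid: `aᵢ aⱼ = a_{j+1} aᵢ` for all `i ≤ j`,
as a relation on the free monoid on `ℕ`. -/
inductive KrumlRel : FreeMonoid ℕ → FreeMonoid ℕ → Prop
  | rel (i j : ℕ) : i ≤ j →
      KrumlRel (FreeMonoid.of i * FreeMonoid.of j) (FreeMonoid.of (j + 1) * FreeMonoid.of i)

/-- Kruml's monoid `S = ⟨a₀, a₁, a₂, … ∣ aᵢaⱼ = a_{j+1}aᵢ for i ≤ j⟩`: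
the quotient of the free monoid on `ℕ` by the congruence generated by the relations. -/
abbrev KrumlMonoid : Type := (conGen KrumlRel).Quotient

namespace KrumlAux

/-- Insertion with shift: increments every entry `≥ i` until meeting an entry `< i`,
where `i` is inserted. -/
def insList (i : ℕ) : List ℕ → List ℕ
  | [] => [i]
  | j :: l => if i ≤ j then (j + 1) :: insList i l else i :: j :: l

/-- Left inverse of `insList i`. -/
def remList (i : ℕ) : List ℕ → List ℕ
  | [] => []
  | j :: l => if i < j then (j - 1) :: remList i l else l

lemma remList_insList (i : ℕ) : ∀ l : List ℕ, remList i (insList i l) = l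
  | [] => by simp [insList, remList]
  | j :: l => by
    by_cases h : i ≤ j
    · simp [insList, remList, h, Nat.lt_succ_of_le h, remList_insList i l]
    · simp [insList, remList, h]

lemma insList_injective (i : ℕ) : Function.Injective (insList i) :=
  Function.LeftInverse.injective (remList_insList i)

lemma insList_exchange {i j : ℕ} (h : i ≤ j) : ∀ l : List ℕ,
    insList i (insList j l) = insList (j + 1) (insList i l)
  | [] => by
    simp only [insList, if_pos h, if_neg (by omega : ¬ j + 1 ≤ i)]
  | k :: l => by
    by_cases h1 : j ≤ k
    · have h2 : i ≤ k := le_trans h h1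
      simp only [insList, if_pos h1, if_pos h2, if_pos (by omega : i ≤ k + 1),
        if_pos (by omega : j + 1 ≤ k + 1), insList_exchange h l]
    · by_cases h2 : i ≤ k
      · simp only [insList, if_neg h1, if_pos h2, if_pos h,
          if_neg (by omega : ¬ j + 1 ≤ k + 1)]
      · simp only [insList, if_neg h1, if_neg h2, if_pos h,
          if_neg (by omega : ¬ j + 1 ≤ i)]

/-- The action of the free monoid on lists by iterated insertion. -/
def F : FreeMonoid ℕ →* Function.End (List ℕ) :=
  FreeMonoid.lift fun i => insList i

lemma F_of (i : ℕ) : F (FreeMonoid.of i) = insList i :=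
  FreeMonoid.lift_eval_of _ i

lemma F_injective (w : FreeMonoid ℕ) : Function.Injective (F w) := by
  induction w using FreeMonoid.recOn with
  | one => rw [map_one]; exact Function.injective_id
  | of_mul x xs ihx =>
    rw [map_mul, F_of]
    exact (insList_injective x).comp ihx

lemma conGen_le_ker : conGen KrumlRel ≤ Con.ker F := by
  apply Con.conGen_le.mpr
  rintro x y ⟨i, j, h⟩
  rw [Con.ker_rel, map_mul, map_mul, F_of, F_of]
  funext l
  exact insList_exchange h l

local notation "mk" => Con.mk' (conGen KrumlRel)

lemma mk_insList (i : ℕ) : ∀ l : List ℕ,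
    mk (FreeMonoid.of i) * mk (FreeMonoid.ofList l)
      = mk (FreeMonoid.ofList (insList i l))
  | [] => by
    simp [insList, FreeMonoid.ofList_nil]
  | j :: l => by
    have hcons : ∀ (a : ℕ) (m : List ℕ),
        FreeMonoid.ofList (a :: m) = FreeMonoid.of a * FreeMonoid.ofList m := fun _ _ => rfl
    by_cases h : i ≤ j
    · have base : mk (FreeMonoid.of i) * mk (FreeMonoid.of j)
          = mk (FreeMonoid.of (j + 1)) * mk (FreeMonoid.of i) := by
        rw [← map_mul, ← map_mul]
        exact (Con.eq _).mpr (ConGen.Rel.of _ _ (KrumlRel.rel i j h))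
      rw [insList, if_pos h, hcons, hcons, map_mul, map_mul, ← mul_assoc, base,
        mul_assoc, mk_insList i l]
    · rw [insList, if_neg h, hcons i, map_mul]

lemma mk_nf : ∀ (w : FreeMonoid ℕ) (l : List ℕ),
    mk w * mk (FreeMonoid.ofList l) = mk (FreeMonoid.ofList (F w l)) := by
  intro w
  induction w using FreeMonoid.recOn with
  | one => intro l; rw [map_one, map_one, one_mul]; exact rfl
  | of_mul x xs ihx =>
    intro l
    rw [map_mul, map_mul, mul_assoc, ihx l, mk_insList, F_of]
    rfl

end KrumlAux

/-- `S` is left cancellative. -/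
theorem krumlMonoid_left_cancellative :
    ∀ s u v : KrumlMonoid, s * u = s * v → u = v := by
  intro s u v h
  obtain ⟨ws, rfl⟩ := Con.mk'_surjective s
  obtain ⟨wu, rfl⟩ := Con.mk'_surjective u
  obtain ⟨wv, rfl⟩ := Con.mk'_surjective v
  rw [← map_mul, ← map_mul] at h
  have hrel : conGen KrumlRel (ws * wu) (ws * wv) := by
    rwa [← Con.eq]
    
  have hF : KrumlAux.F (ws * wu) = KrumlAux.F (ws * wv) :=
    (Con.ker_rel _).mp (KrumlAux.conGen_le_ker hrel)
  have h2 : KrumlAux.F wu [] = KrumlAux.F wv [] := by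
    apply KrumlAux.F_injective ws
    have := congrFun hF []
    rwa [map_mul, map_mul] at this
  have hu := KrumlAux.mk_nf wu []
  have hv := KrumlAux.mk_nf wv []
  rw [FreeMonoid.ofList_nil, map_one, mul_one] at hu hv
  rw [hu, hv, h2]
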